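/- Let R be a regular F-finite domain of characteristic p, f nonzero, α = r/(p^e−1), and I ⊆ τ(f^α) a nonzero ideal with I ⊆ (I^{[p^e]} : f^r). Then I = τ(f^α). -/

import Mathlib

/-- The `q`-th Frobenius power `I^{[q]}` of an ideal: the ideal generated by `q`-th powers
of elements of `I`. -/
def frobPow {R : Type*} [CommRing R] (I : Ideal R) (q : ℕ) : Ideal R :=
  Ideal.span ((fun x => x ^ q) '' (I : Set R))
/-- `I^{[1/q]}`: the smallest ideal `J` with `I ⊆ J^{[q]}` (in a regular ring). -/
noncomputable def frobRoot {R : Type*} [CommRing R] (I : Ideal R) (q : ℕ) : Ideal R :=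
  sInf {J : Ideal R | I ≤ frobPow J q}

/-- The generalized test ideal `τ(f^c) = ⋃_e (f^{⌈c p^e⌉})^{[1/p^e]}`. -/
noncomputable def testIdeal {R : Type*} [CommRing R] (p : ℕ) (f : R) (c : ℝ) : Ideal R :=
  ⨆ e : ℕ, frobRoot (Ideal.span {f ^ (⌈c * (p : ℝ) ^ e⌉₊)}) (p ^ e)

universe u

section Aux
variable {R : Type*} [CommRing R]

lemma frobPow_mono {I J : Ideal R} (hIJ : I ≤ J) (q : ℕ) : frobPow I q ≤ frobPow J q :=
  Ideal.span_mono (Set.image_mono hIJ)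

lemma frobPow_one (I : Ideal R) : frobPow I 1 = I := by
  have h : (fun x : R => x ^ 1) '' (I : Set R) = (I : Set R) := by simp
  rw [frobPow, h, Ideal.span_eq]

lemma pow_mem_frobPow {I : Ideal R} {y : R} (hy : y ∈ I) (q : ℕ) : y ^ q ∈ frobPow I q :=
  Ideal.subset_span ⟨y, hy, rfl⟩

lemma frobPow_le_pow (I : Ideal R) (q : ℕ) : frobPow I q ≤ I ^ q := by
  rw [frobPow, Ideal.span_le]
  rintro _ ⟨y, hy, rfl⟩
  exact Ideal.pow_mem_pow hy q

variable (p : ℕ) [ExpChar R p]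

lemma frobPow_eq_map (I : Ideal R) (t : ℕ) :
    frobPow I (p ^ t) = I.map (iterateFrobenius R p t) := rfl

lemma frobPow_frobPow (I : Ideal R) (a b : ℕ) :
    frobPow (frobPow I (p ^ a)) (p ^ b) = frobPow I (p ^ (a + b)) := by
  rw [frobPow_eq_map, frobPow_eq_map, frobPow_eq_map, Ideal.map_map, add_comm a b,
    iterateFrobenius_add]

lemma frobPow_p_pow (I : Ideal R) (t : ℕ) :
    frobPow (frobPow I p) (p ^ t) = frobPow I (p ^ (t + 1)) := by
  have h := frobPow_frobPow p I 1 t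
  rw [pow_one] at h
  rw [h, Nat.add_comm]

end Aux

lemma flat_colon {R : Type u} [CommRing R] (p : ℕ) [Fact p.Prime] [CharP R p]
    (hflat : @Module.Flat R R _ _ (Module.compHom R (frobenius R p)))
    {J : Ideal R} {g x : R} (hx : x * g ^ p ∈ frobPow J p) :
    x ∈ frobPow (J.colon (Ideal.span {g})) p := by
  classical
  rw [frobPow] at hx
  obtain ⟨n, a, v, hsum⟩ := Submodule.mem_span_set'.mp hx
  choose j hjJ hjv using fun i => (v i).2
  set ι := ULift.{u} (Fin (n + 1)) with hι
  let fc : ι → R := fun i => Fin.cons (α := fun _ => R) g j i.down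
  let xc : ι → R := fun i => Fin.cons (α := fun _ => R) x (fun k => -(a k)) i.down
  have sum_ulift : ∀ G : ι → R, ∑ i, G i = G ⟨0⟩ + ∑ k : Fin n, G ⟨k.succ⟩ := by
    intro G
    rw [Fintype.sum_equiv (Equiv.ulift (α := Fin (n + 1))) G (fun i => G ⟨i⟩) (fun i => rfl),
      Fin.sum_univ_succ]
  have H := @Module.Flat.isTrivialRelation_of_sum_smul_eq_zero R R _ _
      (Module.compHom R (frobenius R p)) hflat ι _ fc xc ?_
  · obtain ⟨κ, b, y, h1, h2⟩ := H
    have h1' : ∀ i : ι, xc i = ∑ j', (b i j') ^ p * y j' := h1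
    have hb : ∀ j', b ⟨0⟩ j' ∈ J.colon (Ideal.span {g}) := by
      intro j'
      rw [Ideal.mem_colon_span_singleton]
      have h2' := h2 j'
      rw [sum_ulift] at h2'
      simp only [fc, Fin.cons_zero, Fin.cons_succ] at h2'
      have h3 : g * b ⟨0⟩ j' = -∑ k : Fin n, j k * b ⟨k.succ⟩ j' :=
        eq_neg_of_add_eq_zero_left h2'
      rw [mul_comm, h3]
      exact neg_mem (Ideal.sum_mem _ fun k _ => Ideal.mul_mem_right _ _ (hjJ k))
    have hx' : x = ∑ j', (b ⟨0⟩ j') ^ p * y j' := by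
      have := h1' ⟨0⟩
      simpa [xc] using this
    rw [hx']
    exact Ideal.sum_mem _ fun j' _ =>
      Ideal.mul_mem_right _ _ (pow_mem_frobPow (hb j') p)
  · show ∑ i : ι, fc i ^ p * xc i = 0
    rw [sum_ulift]
    simp only [fc, xc, Fin.cons_zero, Fin.cons_succ]
    have hsum' : ∑ i, a i * (v i : R) = x * g ^ p := by
      simpa [smul_eq_mul] using hsum
    have h4 : ∑ k : Fin n, j k ^ p * -a k = -∑ k : Fin n, a k * (v k : R) := by
      rw [← Finset.sum_neg_distrib]
      refine Finset.sum_congr rfl fun k _ => ?_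
      have hv : (j k) ^ p = ↑(v k) := hjv k
      rw [← hv]; ring
    rw [h4, hsum']
    ring

lemma flat_colon_pow {R : Type u} [CommRing R] (p : ℕ) [Fact p.Prime] [CharP R p] [ExpChar R p]
    (hflat : @Module.Flat R R _ _ (Module.compHom R (frobenius R p))) :
    ∀ (t : ℕ) (J : Ideal R) (g x : R), x * g ^ p ^ t ∈ frobPow J (p ^ t) →
      x ∈ frobPow (J.colon (Ideal.span {g})) (p ^ t) := by
  intro t
  induction t with
  | zero =>
    intro J g x hx
    simp only [pow_zero, pow_one, frobPow_one] at hx ⊢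
    exact Ideal.mem_colon_span_singleton.mpr hx
  | succ t ih =>
    intro J g x hx
    have hx' : x * (g ^ p) ^ p ^ t ∈ frobPow (frobPow J p) (p ^ t) := by
      rw [frobPow_p_pow, ← pow_mul]
      rw [show p * p ^ t = p ^ (t + 1) from (pow_succ' p t).symm]
      exact hx
    have h2 := ih (frobPow J p) (g ^ p) x hx'
    have step : (frobPow J p).colon (Ideal.span {g ^ p}) ≤
        frobPow (J.colon (Ideal.span {g})) p := fun z hz =>
      flat_colon p hflat (Ideal.mem_colon_span_singleton.mp hz)
    have h3 := frobPow_mono step (p ^ t) h2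
    rwa [frobPow_p_pow] at h3

/-- If `I ⊆ τ(f^α)` is a nonzero ideal with `I ⊆ (I^{[p^e]} : f^r)`, where
`α = r/(p^e − 1)`, then `I = τ(f^α)`. -/
theorem stmt10 {R : Type*} [CommRing R] [IsDomain R] [IsNoetherianRing R]
    (p : ℕ) [Fact p.Prime] [CharP R p] [ExpChar R p]
    (hflat : @Module.Flat R R _ _ (Module.compHom R (frobenius R p)))
    (hFfin : @Module.Finite R R _ _ (Module.compHom R (frobenius R p)))
    (f : R) (hf : f ≠ 0) (r e : ℕ) (hr : 0 < r) (he : 0 < e)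
    (α : ℝ) (hα : α = (r : ℝ) / ((p : ℝ) ^ e - 1))
    (I : Ideal R) (hI0 : I ≠ ⊥) (hIτ : I ≤ testIdeal p f α)
    (h : I ≤ (frobPow I (p ^ e)).colon (Ideal.span {f ^ r})) :
    I = testIdeal p f α := by
  classical
  have hp2 : 2 ≤ p := (Fact.out : p.Prime).two_le
  have hq1 : 1 < p ^ e := Nat.one_lt_pow he.ne' hp2
  have hpeR : (1 : ℝ) < (p : ℝ) ^ e := by exact_mod_cast hq1
  have hcast : ((p ^ e - 1 : ℕ) : ℝ) = (p : ℝ) ^ e - 1 := by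
    rw [Nat.cast_sub hq1.le]; push_cast; ring
  have hαr : α * ((p : ℝ) ^ e - 1) = r := by
    rw [hα, div_mul_cancel₀ _ (sub_ne_zero.mpr (ne_of_gt hpeR))]
  -- key nat inequality
  have hKN : ∀ s : ℕ, r * p ^ s ≤ ⌈α * (p : ℝ) ^ s⌉₊ * (p ^ e - 1) := by
    intro s
    have h1 : α * (p : ℝ) ^ s ≤ (⌈α * (p : ℝ) ^ s⌉₊ : ℝ) := Nat.le_ceil _
    have h2 : (r : ℝ) * (p : ℝ) ^ s ≤ (⌈α * (p : ℝ) ^ s⌉₊ : ℝ) * ((p : ℝ) ^ e - 1) := by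
      calc (r : ℝ) * (p : ℝ) ^ s = (α * ((p : ℝ) ^ e - 1)) * (p : ℝ) ^ s := by rw [hαr]
        _ = (α * (p : ℝ) ^ s) * ((p : ℝ) ^ e - 1) := by ring
        _ ≤ _ := mul_le_mul_of_nonneg_right h1 (by linarith)
    rw [← hcast] at h2
    exact_mod_cast h2
  -- the geometric sums
  set u : ℕ → ℕ := fun k => ∑ i ∈ Finset.range k, (p ^ e) ^ i with hu_def
  have hu : ∀ k, u k * (p ^ e - 1) + 1 = (p ^ e) ^ k := by
    intro k
    induction k with
    | zero => simp [hu_def]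
    | succ k ih =>
      have hsucc : u (k + 1) = u k + (p ^ e) ^ k := Finset.sum_range_succ _ _
      calc u (k + 1) * (p ^ e - 1) + 1
          = (u k * (p ^ e - 1) + 1) + (p ^ e) ^ k * (p ^ e - 1) := by rw [hsucc]; ring
        _ = (p ^ e) ^ k + (p ^ e) ^ k * (p ^ e - 1) := by rw [ih]
        _ = (p ^ e) ^ k * (1 + (p ^ e - 1)) := by ring
        _ = (p ^ e) ^ k * (p ^ e) := by rw [Nat.add_sub_cancel' hq1.le]
        _ = (p ^ e) ^ (k + 1) := (pow_succ _ _).symm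
  -- iterating h
  have hstep : ∀ k, frobPow I (p ^ (e * k)) ≤
      (frobPow I (p ^ (e * (k + 1)))).colon (Ideal.span {f ^ (r * p ^ (e * k))}) := by
    intro k
    rw [frobPow, Ideal.span_le]
    rintro _ ⟨y, hy, rfl⟩
    rw [SetLike.mem_coe, Ideal.mem_colon_span_singleton]
    have h1 : f ^ r * y ∈ frobPow I (p ^ e) := by
      have := Ideal.mem_colon_span_singleton.mp (h hy)
      rwa [mul_comm] at this
    have h2 := pow_mem_frobPow h1 (p ^ (e * k))
    rw [frobPow_frobPow] at h2
    have hexp : e + e * k = e * (k + 1) := by ring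
    rw [hexp] at h2
    have heq2 : y ^ p ^ (e * k) * f ^ (r * p ^ (e * k)) = (f ^ r * y) ^ p ^ (e * k) := by
      rw [mul_pow, ← pow_mul]; ring
    rw [heq2]
    exact h2
  have hA : ∀ k, ∀ x ∈ I, f ^ (r * u k) * x ∈ frobPow I (p ^ (e * k)) := by
    intro k
    induction k with
    | zero =>
      intro x hx
      simp only [hu_def]
      simpa [frobPow_one] using hx
    | succ k ih =>
      intro x hx
      have h1 := ih x hx
      have h2 := Ideal.mem_colon_span_singleton.mp (hstep k h1)
      have hexp : r * u (k + 1) = r * u k + r * p ^ (e * k) := by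
        have hsucc : u (k + 1) = u k + (p ^ e) ^ k := Finset.sum_range_succ _ _
        rw [hsucc, ← pow_mul]
        ring
      rw [hexp, pow_add]
      have heq3 : f ^ (r * u k) * f ^ (r * p ^ (e * k)) * x
          = f ^ (r * u k) * x * f ^ (r * p ^ (e * k)) := by ring
      rw [heq3]
      exact h2
  -- the main claim : f ^ n_s ∈ frobPow I (p ^ s) for each s
  have key : ∀ s : ℕ, f ^ ⌈α * (p : ℝ) ^ s⌉₊ ∈ frobPow I (p ^ s) := by
    intro s
    set n := ⌈α * (p : ℝ) ^ s⌉₊ with hn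
    set C := (frobPow I (p ^ s)).colon (Ideal.span {f ^ n}) with hC_def
    obtain ⟨x, hxI, hx0⟩ := Submodule.exists_mem_ne_zero_of_ne_bot hI0
    have hC : C = ⊤ := by
      by_contra hCne
      have hxmem : ∀ m : ℕ, x ∈ C ^ m := by
        intro m
        set k := s + m with hk
        have hks : s ≤ e * k := by
          have h1 : s + m ≤ e * k := Nat.le_mul_of_pos_left _ he
          omega
        set t := e * k - s with ht
        have hst : s + t = e * k := by omega
        have htm : m ≤ t := by
          have h1 : s + m ≤ e * k := Nat.le_mul_of_pos_left _ he
          omega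
        -- arithmetic : r * u k ≤ n * p ^ t
        have hle : r * u k ≤ n * p ^ t := by
          have h1 : r * u k * (p ^ e - 1) ≤ n * p ^ t * (p ^ e - 1) := by
            calc r * u k * (p ^ e - 1) = r * (u k * (p ^ e - 1)) := by ring
              _ ≤ r * (p ^ e) ^ k := by
                  have := hu k
                  exact Nat.mul_le_mul_left r (by omega)
              _ = r * p ^ (e * k) := by rw [← pow_mul]
              _ = r * (p ^ s * p ^ t) := by rw [← pow_add, hst]
              _ = (r * p ^ s) * p ^ t := by ring
              _ ≤ (n * (p ^ e - 1)) * p ^ t := Nat.mul_le_mul_right _ (hKN s)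
              _ = n * p ^ t * (p ^ e - 1) := by ring
          have hpos : 0 < p ^ e - 1 := by omega
          exact Nat.le_of_mul_le_mul_right h1 hpos
        have h1 := hA k x hxI
        have h2 : x * (f ^ n) ^ p ^ t ∈ frobPow I (p ^ (e * k)) := by
          have heq : x * (f ^ n) ^ p ^ t = f ^ (n * p ^ t - r * u k) * (f ^ (r * u k) * x) := by
            rw [← pow_mul, ← mul_assoc, ← pow_add]
            rw [show n * p ^ t - r * u k + r * u k = n * p ^ t from by omega]
            ring
          rw [heq]
          exact Ideal.mul_mem_left _ _ h1
        have h3 : frobPow I (p ^ (e * k)) = frobPow (frobPow I (p ^ s)) (p ^ t) := by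
          rw [frobPow_frobPow, hst]
        rw [h3] at h2
        have h4 := flat_colon_pow p hflat t (frobPow I (p ^ s)) (f ^ n) x h2
        have h5 : x ∈ C ^ p ^ t := frobPow_le_pow _ _ h4
        have h6 : C ^ p ^ t ≤ C ^ m :=
          Ideal.pow_le_pow_right (le_trans htm (le_of_lt (Nat.lt_pow_self (n := t) hp2)))
        exact h6 h5
      have hbot := Ideal.iInf_pow_eq_bot_of_isDomain (I := C) hCne
      have : x ∈ (⊥ : Ideal R) := by
        rw [← hbot]
        exact Submodule.mem_iInf _ |>.mpr hxmem
      exact hx0 (Submodule.mem_bot _ |>.mp this)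
    have h1 : (1 : R) ∈ C := hC ▸ Submodule.mem_top
    have := Ideal.mem_colon_span_singleton.mp h1
    simpa using this
  -- conclusion
  refine le_antisymm hIτ ?_
  rw [testIdeal]
  refine iSup_le fun s => ?_
  refine sInf_le ?_
  show Ideal.span {f ^ ⌈α * (p : ℝ) ^ s⌉₊} ≤ frobPow I (p ^ s)
  rw [Ideal.span_singleton_le_iff_mem]
  exact key s
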